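/- Let (X,d) be a metric space, 𝔠 = C_d, and X unbounded. Suppose A ∈ N_𝔠 with ⋂_{A∈A} cl(A) = ∅, where (X, λ_d) is asymptotically normal and every unbounded L ⊆ X contains two unbounded asymptotically disjoint subsets. Then no bunch in the nearness space (X, N_𝔠) contains A. -/

import Mathlib

def veeFam {X : Type*} (𝓐 𝓑 : Set (Set X)) : Set (Set X) :=
  {C | ∃ A ∈ 𝓐, ∃ B ∈ 𝓑, C = A ∪ B}

structure IsLSR {X : Type*} (𝔠 : Set (Set (Set X))) : Prop where
  singleton_mem : ∀ A : Set X, ({A} : Set (Set X)) ∈ 𝔠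
  subfamily : ∀ ⦃𝓐 𝓑 : Set (Set X)⦄, 𝓐 ∈ 𝔠 → 𝓑 ⊆ 𝓐 → 𝓑 ∈ 𝔠
  union_mem : ∀ ⦃𝓐 𝓑 : Set (Set X)⦄, 𝓐 ∈ 𝔠 → 𝓑 ∈ 𝔠 → (𝓐 ∩ 𝓑).Nonempty → 𝓐 ∪ 𝓑 ∈ 𝔠
  vee_mem : ∀ ⦃𝓐 𝓑 : Set (Set X)⦄, 𝓐 ∈ 𝔠 → 𝓑 ∈ 𝔠 → veeFam 𝓐 𝓑 ∈ 𝔠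
def LSRBounded {X : Type*} (𝔠 : Set (Set (Set X))) (B : Set X) : Prop :=
  B = ∅ ∨ ∃ x : X, ({B, {x}} : Set (Set X)) ∈ 𝔠
def llRel {X : Type*} (𝓑 𝓐 : Set (Set X)) : Prop := ∀ A ∈ 𝓐, ∃ B ∈ 𝓑, B ⊆ A

structure IsNearness {X : Type*} (N : Set (Set (Set X))) : Prop where
  inter_mem : ∀ 𝓐 : Set (Set X), (⋂₀ 𝓐).Nonempty → 𝓐 ∈ N
  mono : ∀ ⦃𝓐 𝓑 : Set (Set X)⦄, 𝓐 ∈ N → llRel 𝓐 𝓑 → 𝓑 ∈ N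
  not_empty_mem : ∀ 𝓐 ∈ N, (∅ : Set X) ∉ 𝓐
  vee_not_mem : ∀ ⦃𝓐 𝓑 : Set (Set X)⦄, 𝓐 ∉ N → 𝓑 ∉ N → veeFam 𝓐 𝓑 ∉ N
def Nc {X : Type*} [TopologicalSpace X] (𝔠 : Set (Set (Set X))) : Set (Set (Set X)) :=
  {𝓐 | (⋂ A ∈ 𝓐, closure A).Nonempty ∨
    ∃ 𝓑 ∈ 𝔠, (∀ B ∈ 𝓑, ¬ LSRBounded 𝔠 B) ∧ llRel 𝓑 𝓐}

def Cd (X : Type*) [MetricSpace X] : Set (Set (Set X)) :=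
  {𝓐 | ∃ k : ℝ, 0 < k ∧ ∀ A ∈ 𝓐, ∀ B ∈ 𝓐,
    EMetric.hausdorffEdist A B ≤ ENNReal.ofReal k}

def lamd {X : Type*} [MetricSpace X] (A B : Set X) : Prop :=
  EMetric.hausdorffEdist A B ≠ ⊤

def dBounded {X : Type*} [MetricSpace X] (D : Set X) : Prop :=
  D = ∅ ∨ ∃ x : X, lamd D ({x} : Set X)

def dAsympDisjoint {X : Type*} [MetricSpace X] (A B : Set X) : Prop :=
  ∀ L₁ : Set X, L₁ ⊆ A → ∀ L₂ : Set X, L₂ ⊆ B →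
    ¬ dBounded L₁ → ¬ dBounded L₂ → ¬ lamd L₁ L₂

structure IsBunch {X : Type*} [TopologicalSpace X]
    (N : Set (Set (Set X))) (C : Set (Set X)) : Prop where
  nonempty : C.Nonempty
  mem_near : C ∈ N
  union_iff : ∀ A B : Set X, A ∪ B ∈ C ↔ A ∈ C ∨ B ∈ C
  closure_mem : ∀ A : Set X, closure A ∈ C → A ∈ C

lemma dBounded_LSR {X : Type*} [MetricSpace X] {B : Set X} (h : dBounded B) :
    LSRBounded (Cd X) B := by
  rcases h with h | ⟨x, hx⟩
  · exact Or.inl h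
  · refine Or.inr ⟨x, ?_⟩
    refine ⟨(EMetric.hausdorffEdist B ({x} : Set X)).toReal + 1,
      by positivity, ?_⟩
    have hle : EMetric.hausdorffEdist B ({x} : Set X) ≤
        ENNReal.ofReal ((EMetric.hausdorffEdist B ({x} : Set X)).toReal + 1) := by
      calc EMetric.hausdorffEdist B ({x} : Set X)
          = ENNReal.ofReal (EMetric.hausdorffEdist B ({x} : Set X)).toReal :=
            (ENNReal.ofReal_toReal hx).symm
        _ ≤ _ := ENNReal.ofReal_le_ofReal (by linarith)
    intro A hA B' hB'
    rcases hA with rfl | rfl <;> rcases hB' with rfl | rfl <;>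
      simp_all [EMetric.hausdorffEdist, EMetric.hausdorffEdist_self, EMetric.hausdorffEdist_comm]

lemma key_transfer {X : Type*} [MetricSpace X] {D₀ D₁ L : Set X} {k : ℝ} (hk : 0 < k)
    (hH : EMetric.hausdorffEdist D₀ D₁ ≤ ENNReal.ofReal k)
    (hL : L ⊆ D₀) (hLu : ¬ dBounded L) :
    ∃ L' : Set X, L' ⊆ D₁ ∧ ¬ dBounded L' ∧ lamd L' L := by
  classical
  set L' := {z ∈ D₁ | ∃ y ∈ L, edist y z ≤ ENNReal.ofReal (k + 1)} with hL'
  have hHL : EMetric.hausdorffEdist L L' ≤ ENNReal.ofReal (k + 1) := by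
    apply EMetric.hausdorffEdist_le_of_mem_edist
    · intro y hy
      have h1 : EMetric.infEdist y D₁ < ENNReal.ofReal (k + 1) :=
        lt_of_le_of_lt (le_trans (EMetric.infEdist_le_hausdorffEdist_of_mem (hL hy)) hH)
          ((ENNReal.ofReal_lt_ofReal_iff (by linarith)).mpr (by linarith))
      rcases EMetric.infEdist_lt_iff.mp h1 with ⟨z, hz, hz2⟩
      exact ⟨z, ⟨hz, y, hy, hz2.le⟩, hz2.le⟩
    · rintro z ⟨_, y, hy, hyz⟩
      exact ⟨y, hy, by rwa [edist_comm]⟩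
  have hlam : lamd L L' := ne_top_of_le_ne_top ENNReal.ofReal_ne_top hHL
  have hLne : L.Nonempty := by
    rcases Set.eq_empty_or_nonempty L with h' | h'
    · exact absurd (Or.inl h') hLu
    · exact h'
  refine ⟨L', fun z hz => hz.1, ?_, ?_⟩
  · rintro (h | ⟨x, hx⟩)
    · rw [h] at hlam
      exact hlam (EMetric.hausdorffEdist_empty hLne)
    · apply hLu
      refine Or.inr ⟨x, ?_⟩
      have htri := EMetric.hausdorffEdist_triangle (s := L) (t := L') (u := ({x} : Set X))
      exact ne_top_of_le_ne_top (ENNReal.add_ne_top.mpr ⟨hlam, hx⟩) htri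
  · intro h
    exact hlam (by rw [EMetric.hausdorffEdist] at h ⊢; rwa [EMetric.hausdorffEdist_comm] at h)

theorem stmt12 {X : Type*} [MetricSpace X]
    (hXunb : ¬ dBounded (Set.univ : Set X))
    (hnorm : ∀ A B : Set X, dAsympDisjoint A B →
      ∃ X₁ X₂ : Set X, X₁ ∪ X₂ = Set.univ ∧ dAsympDisjoint X₁ A ∧ dAsympDisjoint X₂ B)
    (hsplit : ∀ L : Set X, ¬ dBounded L →
      ∃ L₁ L₂ : Set X, L₁ ⊆ L ∧ L₂ ⊆ L ∧ ¬ dBounded L₁ ∧ ¬ dBounded L₂ ∧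
        dAsympDisjoint L₁ L₂)
    (𝓐 : Set (Set X)) (h𝓐 : 𝓐 ∈ Nc (Cd X))
    (hcl : (⋂ A ∈ 𝓐, closure A) = ∅) :
    ∀ C : Set (Set X), IsBunch (Nc (Cd X)) C → ¬ 𝓐 ⊆ C := by
  intro C hC hsub
  rcases hC.mem_near with hnear | ⟨𝓓, ⟨k, hk, hDk⟩, h𝓓unb, hll⟩
  · rcases hnear with ⟨x, hx⟩
    simp only [Set.mem_iInter] at hx
    have hx' : x ∈ (⋂ A ∈ 𝓐, closure A) :=
      Set.mem_iInter₂.mpr fun A hA => hx A (hsub hA)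
    rw [hcl] at hx'
    exact hx'
  · obtain ⟨A₀, hA₀⟩ := hC.nonempty
    have huniv : (Set.univ : Set X) ∈ C := by
      have := (hC.union_iff A₀ Set.univ).mpr (Or.inl hA₀)
      rwa [Set.union_univ] at this
    obtain ⟨D₀, hD₀, _⟩ := hll A₀ hA₀
    have hD₀unb : ¬ dBounded D₀ := fun h => h𝓓unb D₀ hD₀ (dBounded_LSR h)
    obtain ⟨L₁, L₂, hL₁, hL₂, hL₁u, hL₂u, hdisj⟩ := hsplit D₀ hD₀unb
    obtain ⟨X₁, X₂, hXu, hX₁, hX₂⟩ := hnorm L₁ L₂ hdisj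
    have main : ∀ Y L : Set X, Y ∈ C → L ⊆ D₀ → ¬ dBounded L →
        dAsympDisjoint Y L → False := by
      intro Y L hY hLD hLu hYL
      obtain ⟨D₁, hD₁, hD₁Y⟩ := hll Y hY
      obtain ⟨L', hL'sub, hL'u, hlam⟩ :=
        key_transfer hk (hDk D₀ hD₀ D₁ hD₁) hLD hLu
      exact hYL L' (hL'sub.trans hD₁Y) L Set.Subset.rfl hL'u hLu hlam
    have hmem : X₁ ∈ C ∨ X₂ ∈ C := (hC.union_iff X₁ X₂).mp (hXu ▸ huniv)
    rcases hmem with h | h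
    · exact main X₁ L₁ h hL₁ hL₁u hX₁
    · exact main X₂ L₂ h hL₂ hL₂u hX₂
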